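/- Under the assumptions of the logarithmic equi-confounding bias bound — consistency (Yᵢ = Yᵢ⁽⁰⁾ almost surely for i = 2, …, J+1); logarithmic equi-confounding E[Y₁⁽⁰⁾]/E[Σ_{i=2}^{J+1} Yᵢ⁽⁰⁾] = E[F₁]/E[Σ_{i=2}^{J+1} Fᵢ]; Yᵢ⁽⁰⁾ ∈ [l_y, L_y] and Fᵢ ∈ [l_f, L_f] almost surely with 0 < l_y, 0 < l_f; (1/J²)·Σ_{i ≠ j, 2 ≤ i,j ≤ J+1} |Cov(Fᵢ, Fⱼ)| ≤ τ; and |Cov(F₁ / ((1/J)·Σ_{i=2}^{J+1} Fᵢ), (1/J)·Σ_{i=2}^{J+1} Yᵢ)| ≤ C — suppose in addition that (1/J)·Σ_{i=2}^{J+1} |Cov(F₁, Fᵢ)| ≤ τ₁ for a constant τ₁ ≥ 0. Let Δ_f = L_f − l_f and ψ̂ᵉᑫ² = Y₁ − (F₁ / Σ_{i=2}^{J+1} Fᵢ) · Σ_{i=2}^{J+1} Yᵢ. Then |E[ψ̂ᵉᑫ²] − ψ₀| ≤ L_y · ( τ₁/l_f² + ((Δ_f + L_f)/l_f³) · (Δ_f²/(4J)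 + τ) ) + C. -/

import Mathlib

open MeasureTheory ProbabilityTheory

/-- Covariance of two real random variables: `Cov(U, V) = E[UV] − E[U]·E[V]`. -/
noncomputable def covar {Ω : Type*} [MeasureSpace Ω] (U V : Ω → ℝ) : ℝ :=
  (∫ ω, U ω * V ω) - (∫ ω, U ω) * (∫ ω, V ω)

/-- Variance of a real random variable: `Var(U) = Cov(U, U)`. -/
noncomputable def var {Ω : Type*} [MeasureSpace Ω] (U : Ω → ℝ) : ℝ := covar U U

section Helpers
variable {Ω : Type*} [MeasureSpace Ω]

lemma integrable_of_bdd [IsFiniteMeasure (ℙ : Measure Ω)] {f : Ω → ℝ}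
    (hm : AEStronglyMeasurable f ℙ) {C : ℝ} (h : ∀ᵐ ω ∂ℙ, |f ω| ≤ C) :
    Integrable f ℙ :=
  ⟨hm, MeasureTheory.HasFiniteIntegral.of_bounded (C := C) (by simpa using h)⟩

lemma covar_comm (f g : Ω → ℝ) : covar f g = covar g f := by
  unfold covar
  simp_rw [mul_comm (f _)]
  ring

lemma integral_cmul (c : ℝ) (f : Ω → ℝ) : (∫ ω, c * f ω) = c * ∫ ω, f ω :=
  integral_const_mul c f

lemma covar_const_mul (c : ℝ) (f g : Ω → ℝ) :
    covar f (fun ω => c * g ω) = c * covar f g := by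
  simp only [covar]
  have h : (fun ω => f ω * (c * g ω)) = fun ω => c * (f ω * g ω) := by
    funext ω; ring
  rw [h, integral_cmul, integral_cmul]
  ring

lemma covar_sum_right {s : Finset ℕ} (f : Ω → ℝ) (g : ℕ → Ω → ℝ)
    (hg : ∀ j ∈ s, Integrable (g j) ℙ)
    (hfg : ∀ j ∈ s, Integrable (fun ω => f ω * g j ω) ℙ) :
    covar f (fun ω => ∑ j ∈ s, g j ω) = ∑ j ∈ s, covar f (g j) := by
  simp only [covar]
  have h1 : (fun ω => f ω * ∑ j ∈ s, g j ω) = fun ω => ∑ j ∈ s, f ω * g j ω := by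
    funext ω; rw [Finset.mul_sum]
  rw [h1, integral_finset_sum s hfg, integral_finset_sum s hg, Finset.mul_sum,
    ← Finset.sum_sub_distrib]

lemma covar_sum_sum {s t : Finset ℕ} (f g : ℕ → Ω → ℝ)
    (hf : ∀ i ∈ s, Integrable (f i) ℙ) (hg : ∀ j ∈ t, Integrable (g j) ℙ)
    (hfg : ∀ i ∈ s, ∀ j ∈ t, Integrable (fun ω => f i ω * g j ω) ℙ) :
    covar (fun ω => ∑ i ∈ s, f i ω) (fun ω => ∑ j ∈ t, g j ω)
      = ∑ i ∈ s, ∑ j ∈ t, covar (f i) (g j) := by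
  have hint : ∀ j ∈ t, Integrable (fun ω => (∑ i ∈ s, f i ω) * g j ω) ℙ := by
    intro j hj
    have h2 : (fun ω => (∑ i ∈ s, f i ω) * g j ω) = fun ω => ∑ i ∈ s, f i ω * g j ω := by
      funext ω; rw [Finset.sum_mul]
    rw [h2]; exact integrable_finset_sum _ (fun i hi => hfg i hi j hj)
  rw [covar_sum_right _ _ hg hint, Finset.sum_comm]
  refine Finset.sum_congr rfl fun j hj => ?_
  rw [covar_comm, covar_sum_right _ _ hf (fun i hi => by
    simpa [mul_comm] using hfg i hi j hj)]
  exact Finset.sum_congr rfl fun i hi => covar_comm _ _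

lemma var_le_of_bdd [IsProbabilityMeasure (ℙ : Measure Ω)] {f : Ω → ℝ} {a b : ℝ}
    (hm : Measurable f) (hab : ∀ᵐ ω ∂ℙ, f ω ∈ Set.Icc a b) :
    var f ≤ (b - a) ^ 2 / 4 := by
  have hC : ∀ᵐ ω ∂ℙ, |f ω| ≤ max |a| |b| := hab.mono fun ω h => abs_le.2
    ⟨by have h1 := neg_abs_le a; have h2 := le_max_left |a| |b|; linarith [h.1],
     by have h1 := le_abs_self b; have h2 := le_max_right |a| |b|; linarith [h.2]⟩
  have hint : Integrable f ℙ := integrable_of_bdd hm.aestronglyMeasurable hC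
  have hint2 : Integrable (fun ω => f ω * f ω) ℙ :=
    integrable_of_bdd (hm.mul hm).aestronglyMeasurable (C := max |a| |b| * max |a| |b|)
      (hC.mono fun ω h => by
        rw [abs_mul]
        exact mul_le_mul h h (abs_nonneg _) ((abs_nonneg _).trans h))
  set m := ∫ ω, f ω with hm'
  have hma : a ≤ m := by
    have := integral_mono_ae (integrable_const a) hint (hab.mono fun ω h => h.1)
    simpa [hm'] using this
  have hmb : m ≤ b := by
    have := integral_mono_ae hint (integrable_const b) (hab.mono fun ω h => h.2)
    simpa [hm'] using this
  have hpos : 0 ≤ ∫ ω, (b - f ω) * (f ω - a) :=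
    integral_nonneg_of_ae (hab.mono fun ω h =>
      mul_nonneg (by linarith [h.2]) (by linarith [h.1]))
  have hexp : (∫ ω, (b - f ω) * (f ω - a))
      = (a + b) * m - (∫ ω, f ω * f ω) - a * b := by
    have e1 : (∫ ω, (b - f ω) * (f ω - a))
        = ∫ ω, (((a + b) * f ω - f ω * f ω) - a * b) := by
      congr 1; funext ω; ring
    have e2 : (∫ ω, (((a + b) * f ω - f ω * f ω) - a * b))
        = (∫ ω, ((a + b) * f ω - f ω * f ω)) - ∫ (_ : Ω), a * b :=
      integral_sub ((hint.const_mul _).sub hint2) (integrable_const _)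
    have e3 : (∫ ω, ((a + b) * f ω - f ω * f ω))
        = (∫ ω, (a + b) * f ω) - ∫ ω, f ω * f ω :=
      integral_sub (hint.const_mul _) hint2
    rw [e1, e2, e3, integral_cmul, integral_const]
    simp [hm']
  show covar f f ≤ _
  unfold covar
  rw [← hm']
  nlinarith [sq_nonneg (a + b - 2 * m)]

lemma ratio_bound [IsProbabilityMeasure (ℙ : Measure Ω)]
    {G Φ : Ω → ℝ} (hGm : Measurable G) (hΦm : Measurable Φ)
    {a b c : ℝ} (ha : 0 < a)
    (hGb : ∀ᵐ ω ∂ℙ, G ω ∈ Set.Icc 0 c)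
    (hΦb : ∀ᵐ ω ∂ℙ, Φ ω ∈ Set.Icc a b) :
    |(∫ ω, G ω) / (∫ ω, Φ ω) - ∫ ω, G ω / Φ ω|
      ≤ |covar G Φ| / a ^ 2 + c * var Φ / a ^ 3 := by
  have hc : 0 ≤ c := by
    obtain ⟨ω, hω⟩ := hGb.exists
    exact le_trans hω.1 hω.2
  have hab : a ≤ b := by
    obtain ⟨ω, hω⟩ := hΦb.exists
    exact le_trans hω.1 hω.2
  have hb : 0 < b := lt_of_lt_of_le ha hab
  have hintG : Integrable G ℙ := integrable_of_bdd hGm.aestronglyMeasurable (C := c)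
    (hGb.mono fun ω h => abs_le.2 ⟨by linarith [h.1], h.2⟩)
  have hΦabs : ∀ᵐ ω ∂ℙ, |Φ ω| ≤ b := hΦb.mono fun ω h => abs_le.2 ⟨by linarith [h.1], h.2⟩
  have hintΦ : Integrable Φ ℙ := integrable_of_bdd hΦm.aestronglyMeasurable hΦabs
  have hintGΦ : Integrable (fun ω => G ω * Φ ω) ℙ := by
    apply integrable_of_bdd (hGm.mul hΦm).aestronglyMeasurable (C := c * b)
    filter_upwards [hGb, hΦb] with ω h1 h2
    show |G ω * Φ ω| ≤ _
    rw [abs_mul]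
    exact mul_le_mul (abs_le.2 ⟨by linarith [h1.1], h1.2⟩)
      (abs_le.2 ⟨by linarith [h2.1], h2.2⟩) (abs_nonneg _) hc
  have hintΦΦ : Integrable (fun ω => Φ ω * Φ ω) ℙ := by
    apply integrable_of_bdd (hΦm.mul hΦm).aestronglyMeasurable (C := b * b)
    filter_upwards [hΦb] with ω h2
    show |Φ ω * Φ ω| ≤ _
    rw [abs_mul]
    exact mul_le_mul (abs_le.2 ⟨by linarith [h2.1], h2.2⟩)
      (abs_le.2 ⟨by linarith [h2.1], h2.2⟩) (abs_nonneg _) hb.le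
  set μ := ∫ ω, Φ ω with hμdef
  have hμa : a ≤ μ := by
    have := integral_mono_ae (integrable_const a) hintΦ (hΦb.mono fun ω h => h.1)
    simpa [hμdef] using this
  have hμb : μ ≤ b := by
    have := integral_mono_ae hintΦ (integrable_const b) (hΦb.mono fun ω h => h.2)
    simpa [hμdef] using this
  have hμ0 : 0 < μ := lt_of_lt_of_le ha hμa
  have hintR : Integrable (fun ω => G ω / Φ ω) ℙ := by
    apply integrable_of_bdd (hGm.div hΦm).aestronglyMeasurable (C := c / a)
    filter_upwards [hGb, hΦb] with ω h1 h2
    show |G ω / Φ ω| ≤ _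
    rw [abs_div]
    exact div_le_div₀ hc (abs_le.2 ⟨by linarith [h1.1], h1.2⟩) ha
      (le_trans h2.1 (le_abs_self _))
  have hintH : Integrable (fun ω => G ω * (Φ ω - μ) ^ 2 / Φ ω) ℙ := by
    apply integrable_of_bdd
      ((hGm.mul ((hΦm.sub measurable_const).pow_const 2)).div hΦm).aestronglyMeasurable
      (C := c * (b - a) ^ 2 / a)
    filter_upwards [hGb, hΦb] with ω h1 h2
    show |G ω * (Φ ω - μ) ^ 2 / Φ ω| ≤ _
    rw [abs_div, abs_mul]
    have hsq : (Φ ω - μ) ^ 2 ≤ (b - a) ^ 2 :=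
      sq_le_sq' (by linarith [h2.1]) (by linarith [h2.2])
    have hnum : |G ω| * |(Φ ω - μ) ^ 2| ≤ c * (b - a) ^ 2 := by
      rw [abs_of_nonneg (sq_nonneg (Φ ω - μ))]
      exact mul_le_mul (abs_le.2 ⟨by linarith [h1.1], h1.2⟩) hsq (sq_nonneg _) hc
    exact div_le_div₀ (mul_nonneg hc (sq_nonneg _)) hnum ha (le_trans h2.1 (le_abs_self _))
  have hintSq : Integrable (fun ω => (Φ ω - μ) ^ 2) ℙ := by
    apply integrable_of_bdd ((hΦm.sub measurable_const).pow_const 2).aestronglyMeasurable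
      (C := (b - a) ^ 2)
    filter_upwards [hΦb] with ω h2
    show |(Φ ω - μ) ^ 2| ≤ _
    rw [abs_of_nonneg (sq_nonneg _)]
    exact sq_le_sq' (by linarith [h2.1]) (by linarith [h2.2])
  -- key pointwise identity, integrated
  have hkey : μ ^ 2 * (∫ ω, G ω / Φ ω)
      = 2 * μ * (∫ ω, G ω) - (∫ ω, G ω * Φ ω) + ∫ ω, G ω * (Φ ω - μ) ^ 2 / Φ ω := by
    have hpt : (∫ ω, μ ^ 2 * (G ω / Φ ω))
        = ∫ ω, (2 * μ * G ω - G ω * Φ ω + G ω * (Φ ω - μ) ^ 2 / Φ ω) := by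
      apply integral_congr_ae
      filter_upwards [hΦb] with ω h2
      have hx : Φ ω ≠ 0 := ne_of_gt (lt_of_lt_of_le ha h2.1)
      field_simp
      ring
    have e1 : (∫ ω, (2 * μ * G ω - G ω * Φ ω + G ω * (Φ ω - μ) ^ 2 / Φ ω))
        = (∫ ω, (2 * μ * G ω - G ω * Φ ω)) + ∫ ω, G ω * (Φ ω - μ) ^ 2 / Φ ω :=
      integral_add ((hintG.const_mul _).sub hintGΦ) hintH
    have e2 : (∫ ω, (2 * μ * G ω - G ω * Φ ω))
        = (∫ ω, 2 * μ * G ω) - ∫ ω, G ω * Φ ω :=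
      integral_sub (hintG.const_mul _) hintGΦ
    rw [← integral_cmul, hpt, e1, e2, integral_cmul]
  have hcov' : covar G Φ = (∫ ω, G ω * Φ ω) - (∫ ω, G ω) * μ := by
    simp only [covar, hμdef]
  have hVar : var Φ = ∫ ω, (Φ ω - μ) ^ 2 := by
    have h0 : (∫ ω, (Φ ω - μ) ^ 2) = ∫ ω, ((Φ ω * Φ ω - 2 * μ * Φ ω) + μ * μ) := by
      congr 1; funext ω; ring
    have h4 : (∫ ω, ((Φ ω * Φ ω - 2 * μ * Φ ω) + μ * μ))
        = (∫ ω, (Φ ω * Φ ω - 2 * μ * Φ ω)) + ∫ (_ : Ω), μ * μ :=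
      integral_add (hintΦΦ.sub (hintΦ.const_mul _)) (integrable_const _)
    have h5 : (∫ ω, (Φ ω * Φ ω - 2 * μ * Φ ω))
        = (∫ ω, Φ ω * Φ ω) - ∫ ω, 2 * μ * Φ ω :=
      integral_sub hintΦΦ (hintΦ.const_mul _)
    show covar Φ Φ = _
    rw [h0, h4, h5, integral_cmul, integral_const]
    simp only [covar, hμdef, probReal_univ, smul_eq_mul, one_mul]
    ring
  have hVar0 : 0 ≤ var Φ := hVar ▸ integral_nonneg (fun ω => sq_nonneg _)
  set T := ∫ ω, G ω * (Φ ω - μ) ^ 2 / Φ ω with hTdef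
  have hT0 : 0 ≤ T := by
    rw [hTdef]
    apply integral_nonneg_of_ae
    filter_upwards [hGb, hΦb] with ω h1 h2
    exact div_nonneg (mul_nonneg h1.1 (sq_nonneg _)) (le_trans ha.le h2.1)
  have hTle : T ≤ (c / a) * var Φ := by
    rw [hTdef, hVar, ← integral_cmul]
    apply integral_mono_ae hintH (hintSq.const_mul _)
    filter_upwards [hGb, hΦb] with ω h1 h2
    have hx : 0 < Φ ω := lt_of_lt_of_le ha h2.1
    rw [mul_div_right_comm]
    exact mul_le_mul_of_nonneg_right (div_le_div₀ hc h1.2 ha h2.1) (sq_nonneg _)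
  have hD2 : μ ^ 2 * ((∫ ω, G ω) / μ - ∫ ω, G ω / Φ ω) = covar G Φ - T := by
    have h5 : μ ^ 2 * ((∫ ω, G ω) / μ) = μ * ∫ ω, G ω := by
      field_simp
    rw [hcov', mul_sub, h5, hkey]
    ring
  have h8 : |(∫ ω, G ω) / μ - ∫ ω, G ω / Φ ω| = |covar G Φ - T| / μ ^ 2 := by
    rw [← hD2, abs_mul, abs_of_pos (by positivity : (0:ℝ) < μ ^ 2),
      mul_div_cancel_left₀ _ (by positivity : (μ:ℝ) ^ 2 ≠ 0)]
  have h7 : |covar G Φ - T| ≤ |covar G Φ| + (c / a) * var Φ := by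
    calc |covar G Φ - T| ≤ |covar G Φ| + |T| := abs_sub _ _
    _ ≤ |covar G Φ| + (c / a) * var Φ := by
        rw [abs_of_nonneg hT0]; linarith
  have hnum0 : 0 ≤ |covar G Φ| + (c / a) * var Φ :=
    add_nonneg (abs_nonneg _) (mul_nonneg (div_nonneg hc ha.le) hVar0)
  have hμ2 : a ^ 2 ≤ μ ^ 2 := by nlinarith
  rw [h8]
  calc |covar G Φ - T| / μ ^ 2 ≤ (|covar G Φ| + (c / a) * var Φ) / a ^ 2 :=
        div_le_div₀ hnum0 h7 (by positivity) hμ2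
  _ = |covar G Φ| / a ^ 2 + c * var Φ / a ^ 3 := by
        field_simp

lemma var_nonneg_of_bdd [IsProbabilityMeasure (ℙ : Measure Ω)] {f : Ω → ℝ} {a b : ℝ}
    (hm : Measurable f) (hab : ∀ᵐ ω ∂ℙ, f ω ∈ Set.Icc a b) : 0 ≤ var f := by
  have hC : ∀ᵐ ω ∂ℙ, |f ω| ≤ max |a| |b| := hab.mono fun ω h => abs_le.2
    ⟨by have h1 := neg_abs_le a; have h2 := le_max_left |a| |b|; linarith [h.1],
     by have h1 := le_abs_self b; have h2 := le_max_right |a| |b|; linarith [h.2]⟩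
  have hint : Integrable f ℙ := integrable_of_bdd hm.aestronglyMeasurable hC
  have hint2 : Integrable (fun ω => f ω * f ω) ℙ :=
    integrable_of_bdd (hm.mul hm).aestronglyMeasurable (C := max |a| |b| * max |a| |b|)
      (hC.mono fun ω h => by
        rw [abs_mul]
        exact mul_le_mul h h (abs_nonneg _) ((abs_nonneg _).trans h))
  set m := ∫ ω, f ω with hm'
  have hVar : var f = ∫ ω, (f ω - m) ^ 2 := by
    have h0 : (∫ ω, (f ω - m) ^ 2) = ∫ ω, ((f ω * f ω - 2 * m * f ω) + m * m) := by
      congr 1; funext ω; ring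
    have h4 : (∫ ω, ((f ω * f ω - 2 * m * f ω) + m * m))
        = (∫ ω, (f ω * f ω - 2 * m * f ω)) + ∫ (_ : Ω), m * m :=
      integral_add (hint2.sub (hint.const_mul _)) (integrable_const _)
    have h5 : (∫ ω, (f ω * f ω - 2 * m * f ω))
        = (∫ ω, f ω * f ω) - ∫ ω, 2 * m * f ω :=
      integral_sub hint2 (hint.const_mul _)
    show covar f f = _
    rw [h0, h4, h5, integral_cmul, integral_const]
    simp only [covar, hm', probReal_univ, smul_eq_mul, one_mul]
    ring
  rw [hVar]
  exact integral_nonneg fun ω => sq_nonneg _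

end Helpers


/-- **Corollary 3.1 (improved bias bound for the logarithmic equi-confounding
estimator).** Under the assumptions of the logarithmic equi-confounding bias bound,
together with the additional cross-covariance condition
`(1/J)·Σ_{i=2}^{J+1} |Cov(F₁, Fᵢ)| ≤ τ₁`, the absolute bias of
`ψ̂ᵉᑫ² = Y₁ − (F₁/Σ_{i=2}^{J+1} Fᵢ)·Σ_{i=2}^{J+1} Yᵢ` for `ψ₀ = E[Y₁] − E[Y₁⁽⁰⁾]`
is bounded by `L_y·(τ₁/l_f² + ((Δ_f + L_f)/l_f³)·(Δ_f²/(4J) + τ)) + C`. -/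
theorem log_equiconfounding_bias_bound_improved
    {Ω : Type*} [MeasureSpace Ω] [IsProbabilityMeasure (ℙ : Measure Ω)]
    (J : ℕ) (hJ : 1 ≤ J)
    (Y Y0 F : ℕ → Ω → ℝ)
    (hYint : ∀ i ∈ Finset.Icc 1 (J + 1), Integrable (Y i) ℙ)
    (hY0int : ∀ i ∈ Finset.Icc 1 (J + 1), Integrable (Y0 i) ℙ)
    (hFint : ∀ i ∈ Finset.Icc 1 (J + 1), Integrable (F i) ℙ)
    (hYmeas : ∀ i ∈ Finset.Icc 1 (J + 1), Measurable (Y i))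
    (hFmeas : ∀ i ∈ Finset.Icc 1 (J + 1), Measurable (F i))
    -- consistency
    (hcons : ∀ i ∈ Finset.Icc 2 (J + 1), Y i =ᵐ[ℙ] Y0 i)
    -- logarithmic equi-confounding
    (hlogequi :
      (∫ ω, Y0 1 ω) / (∫ ω, ∑ i ∈ Finset.Icc 2 (J + 1), Y0 i ω)
        = (∫ ω, F 1 ω) / (∫ ω, ∑ i ∈ Finset.Icc 2 (J + 1), F i ω))
    -- boundedness
    (ly Ly lf Lf : ℝ) (hly : 0 < ly) (hlf : 0 < lf)
    (hY0bdd : ∀ i ∈ Finset.Icc 1 (J + 1), ∀ᵐ ω ∂ℙ, Y0 i ω ∈ Set.Icc ly Ly)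
    (hFbdd : ∀ i ∈ Finset.Icc 1 (J + 1), ∀ᵐ ω ∂ℙ, F i ω ∈ Set.Icc lf Lf)
    -- weak dependence among controls
    (τ : ℝ) (hτ : 0 ≤ τ)
    (hweak : (1 / (J : ℝ) ^ 2) *
        ∑ i ∈ Finset.Icc 2 (J + 1), ∑ j ∈ (Finset.Icc 2 (J + 1)).erase i,
          |covar (F i) (F j)| ≤ τ)
    -- covariance condition on the ratio
    (C : ℝ) (hC : 0 ≤ C)
    (hcov : |covar (fun ω => F 1 ω / ((1 / (J : ℝ)) * ∑ i ∈ Finset.Icc 2 (J + 1), F i ω))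
        (fun ω => (1 / (J : ℝ)) * ∑ i ∈ Finset.Icc 2 (J + 1), Y i ω)| ≤ C)
    -- additional cross-covariance condition between target and control units
    (τ₁ : ℝ) (hτ₁ : 0 ≤ τ₁)
    (hcross : (1 / (J : ℝ)) * ∑ i ∈ Finset.Icc 2 (J + 1), |covar (F 1) (F i)| ≤ τ₁) :
    |(∫ ω, (Y 1 ω - F 1 ω / (∑ i ∈ Finset.Icc 2 (J + 1), F i ω)
          * ∑ i ∈ Finset.Icc 2 (J + 1), Y i ω))
        - ((∫ ω, Y 1 ω) - ∫ ω, Y0 1 ω)|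
      ≤ Ly * (τ₁ / lf ^ 2
          + ((Lf - lf) + Lf) / lf ^ 3 * ((Lf - lf) ^ 2 / (4 * J) + τ)) + C := by
  have hJ' : (J : ℝ) ≠ 0 := Nat.cast_ne_zero.2 (by omega)
  have hJpos : (0 : ℝ) < J := Nat.cast_pos.2 hJ
  set s : Finset ℕ := Finset.Icc 2 (J + 1) with hs
  have hsub : ∀ i ∈ s, i ∈ Finset.Icc 1 (J + 1) := by
    intro i hi
    simp only [hs, Finset.mem_Icc] at hi ⊢
    omega
  have h1mem : (1 : ℕ) ∈ Finset.Icc 1 (J + 1) := by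
    simp only [Finset.mem_Icc]
    omega
  have hcard : s.card = J := by
    rw [hs, Nat.card_Icc]
    omega
  -- a.e. facts, uniformly
  have hFall : ∀ᵐ ω ∂ℙ, ∀ i, i ∈ Finset.Icc 1 (J + 1) → F i ω ∈ Set.Icc lf Lf := by
    rw [MeasureTheory.ae_all_iff]
    intro i
    by_cases hi : i ∈ Finset.Icc 1 (J + 1)
    · filter_upwards [hFbdd i hi] with ω h _ using h
    · filter_upwards with ω h using absurd h hi
  have hY0all : ∀ᵐ ω ∂ℙ, ∀ i, i ∈ Finset.Icc 1 (J + 1) → Y0 i ω ∈ Set.Icc ly Ly := by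
    rw [MeasureTheory.ae_all_iff]
    intro i
    by_cases hi : i ∈ Finset.Icc 1 (J + 1)
    · filter_upwards [hY0bdd i hi] with ω h _ using h
    · filter_upwards with ω h using absurd h hi
  have hconsall : ∀ᵐ ω ∂ℙ, ∀ i, i ∈ s → Y i ω = Y0 i ω := by
    rw [MeasureTheory.ae_all_iff]
    intro i
    by_cases hi : i ∈ s
    · filter_upwards [hcons i hi] with ω h _ using h
    · filter_upwards with ω h using absurd h hi
  -- order facts
  have hlfLf : lf ≤ Lf := by
    obtain ⟨ω, hω⟩ := (hFbdd 1 h1mem).exists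
    exact le_trans hω.1 hω.2
  have hlyLy : ly ≤ Ly := by
    obtain ⟨ω, hω⟩ := (hY0bdd 1 h1mem).exists
    exact le_trans hω.1 hω.2
  -- averages are bounded a.e.
  have hFbig : ∀ᵐ ω ∂ℙ, ((1 / (J : ℝ)) * ∑ i ∈ s, F i ω) ∈ Set.Icc lf Lf := by
    filter_upwards [hFall] with ω h
    have h1 : (J : ℝ) * lf ≤ ∑ i ∈ s, F i ω := by
      calc (J : ℝ) * lf = ∑ _i ∈ s, lf := by
            rw [Finset.sum_const, hcard, nsmul_eq_mul]
        _ ≤ _ := Finset.sum_le_sum fun i hi => (h i (hsub i hi)).1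
    have h2 : (∑ i ∈ s, F i ω) ≤ (J : ℝ) * Lf := by
      calc (∑ i ∈ s, F i ω) ≤ ∑ _i ∈ s, Lf :=
            Finset.sum_le_sum fun i hi => (h i (hsub i hi)).2
        _ = (J : ℝ) * Lf := by rw [Finset.sum_const, hcard, nsmul_eq_mul]
    constructor
    · have h3 := mul_le_mul_of_nonneg_left h1 (by positivity : (0:ℝ) ≤ 1 / (J : ℝ))
      calc lf = (1 / (J : ℝ)) * ((J : ℝ) * lf) := by field_simp
        _ ≤ _ := h3
    · have h3 := mul_le_mul_of_nonneg_left h2 (by positivity : (0:ℝ) ≤ 1 / (J : ℝ))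
      calc (1 / (J : ℝ)) * ∑ i ∈ s, F i ω ≤ (1 / (J : ℝ)) * ((J : ℝ) * Lf) := h3
        _ = Lf := by field_simp
  have hYbig : ∀ᵐ ω ∂ℙ, ((1 / (J : ℝ)) * ∑ i ∈ s, Y i ω) ∈ Set.Icc ly Ly := by
    filter_upwards [hY0all, hconsall] with ω h hc'
    have hsum : (∑ i ∈ s, Y i ω) = ∑ i ∈ s, Y0 i ω :=
      Finset.sum_congr rfl fun i hi => hc' i hi
    have h1 : (J : ℝ) * ly ≤ ∑ i ∈ s, Y i ω := by
      rw [hsum]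
      calc (J : ℝ) * ly = ∑ _i ∈ s, ly := by
            rw [Finset.sum_const, hcard, nsmul_eq_mul]
        _ ≤ _ := Finset.sum_le_sum fun i hi => (h i (hsub i hi)).1
    have h2 : (∑ i ∈ s, Y i ω) ≤ (J : ℝ) * Ly := by
      rw [hsum]
      calc (∑ i ∈ s, Y0 i ω) ≤ ∑ _i ∈ s, Ly :=
            Finset.sum_le_sum fun i hi => (h i (hsub i hi)).2
        _ = (J : ℝ) * Ly := by rw [Finset.sum_const, hcard, nsmul_eq_mul]
    constructor
    · have h3 := mul_le_mul_of_nonneg_left h1 (by positivity : (0:ℝ) ≤ 1 / (J : ℝ))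
      calc ly = (1 / (J : ℝ)) * ((J : ℝ) * ly) := by field_simp
        _ ≤ _ := h3
    · have h3 := mul_le_mul_of_nonneg_left h2 (by positivity : (0:ℝ) ≤ 1 / (J : ℝ))
      calc (1 / (J : ℝ)) * ∑ i ∈ s, Y i ω ≤ (1 / (J : ℝ)) * ((J : ℝ) * Ly) := h3
        _ = Ly := by field_simp
  -- integrability / measurability
  have intF : ∀ i ∈ s, Integrable (F i) ℙ := fun i hi => hFint i (hsub i hi)
  have intSF : Integrable (fun ω => ∑ i ∈ s, F i ω) ℙ := integrable_finset_sum _ intF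
  have measSF : Measurable (fun ω => ∑ i ∈ s, F i ω) :=
    Finset.measurable_sum _ (fun i hi => hFmeas i (hsub i hi))
  have measFb : Measurable (fun ω => (1 / (J : ℝ)) * ∑ i ∈ s, F i ω) := measSF.const_mul _
  have intSY : Integrable (fun ω => ∑ i ∈ s, Y i ω) ℙ :=
    integrable_finset_sum _ (fun i hi => hYint i (hsub i hi))
  have measSY : Measurable (fun ω => ∑ i ∈ s, Y i ω) :=
    Finset.measurable_sum _ (fun i hi => hYmeas i (hsub i hi))
  have measYb : Measurable (fun ω => (1 / (J : ℝ)) * ∑ i ∈ s, Y i ω) := measSY.const_mul _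
  have intYb : Integrable (fun ω => (1 / (J : ℝ)) * ∑ i ∈ s, Y i ω) ℙ := intSY.const_mul _
  have intSY0 : Integrable (fun ω => ∑ i ∈ s, Y0 i ω) ℙ :=
    integrable_finset_sum _ (fun i hi => hY0int i (hsub i hi))
  have intFF : ∀ i ∈ Finset.Icc 1 (J + 1), ∀ j ∈ Finset.Icc 1 (J + 1),
      Integrable (fun ω => F i ω * F j ω) ℙ := by
    intro i hi j hj
    apply integrable_of_bdd ((hFmeas i hi).mul (hFmeas j hj)).aestronglyMeasurable
      (C := Lf * Lf)
    filter_upwards [hFbdd i hi, hFbdd j hj] with ω h1 h2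
    show |F i ω * F j ω| ≤ _
    rw [abs_mul]
    exact mul_le_mul (abs_le.2 ⟨by linarith [h1.1], h1.2⟩)
      (abs_le.2 ⟨by linarith [h2.1], h2.2⟩) (abs_nonneg _) (by linarith)
  have hintRYb : Integrable (fun ω =>
      (F 1 ω / ((1 / (J : ℝ)) * ∑ i ∈ s, F i ω)) * ((1 / (J : ℝ)) * ∑ i ∈ s, Y i ω)) ℙ := by
    apply integrable_of_bdd (((hFmeas 1 h1mem).div measFb).mul measYb).aestronglyMeasurable
      (C := (Lf / lf) * Ly)
    filter_upwards [hFbig, hYbig, hFbdd 1 h1mem] with ω h1 h2 h3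
    show |F 1 ω / ((1 / (J : ℝ)) * ∑ i ∈ s, F i ω) * ((1 / (J : ℝ)) * ∑ i ∈ s, Y i ω)| ≤ _
    rw [abs_mul, abs_div]
    have e1 : |F 1 ω| ≤ Lf := abs_le.2 ⟨by linarith [h3.1], h3.2⟩
    have e2 : lf ≤ |(1 / (J : ℝ)) * ∑ i ∈ s, F i ω| := le_trans h1.1 (le_abs_self _)
    have e3 : |(1 / (J : ℝ)) * ∑ i ∈ s, Y i ω| ≤ Ly :=
      abs_le.2 ⟨by linarith [h2.1, hly, hlyLy], h2.2⟩
    exact mul_le_mul (div_le_div₀ (by linarith) e1 hlf e2) e3 (abs_nonneg _)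
      (div_nonneg (by linarith) hlf.le)
  -- positivity of total sums
  have hSFge : (J : ℝ) * lf ≤ ∫ ω, ∑ i ∈ s, F i ω := by
    have h0 : ∀ᵐ ω ∂ℙ, (J : ℝ) * lf ≤ ∑ i ∈ s, F i ω := by
      filter_upwards [hFall] with ω h
      calc (J : ℝ) * lf = ∑ _i ∈ s, lf := by rw [Finset.sum_const, hcard, nsmul_eq_mul]
        _ ≤ _ := Finset.sum_le_sum fun i hi => (h i (hsub i hi)).1
    have := integral_mono_ae (integrable_const _) intSF h0
    simpa using this
  have hSFpos : 0 < ∫ ω, ∑ i ∈ s, F i ω :=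
    lt_of_lt_of_le (mul_pos hJpos hlf) hSFge
  have hSY0ge : (J : ℝ) * ly ≤ ∫ ω, ∑ i ∈ s, Y0 i ω := by
    have h0 : ∀ᵐ ω ∂ℙ, (J : ℝ) * ly ≤ ∑ i ∈ s, Y0 i ω := by
      filter_upwards [hY0all] with ω h
      calc (J : ℝ) * ly = ∑ _i ∈ s, ly := by rw [Finset.sum_const, hcard, nsmul_eq_mul]
        _ ≤ _ := Finset.sum_le_sum fun i hi => (h i (hsub i hi)).1
    have := integral_mono_ae (integrable_const _) intSY0 h0
    simpa using this
  have hSY0pos : 0 < ∫ ω, ∑ i ∈ s, Y0 i ω :=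
    lt_of_lt_of_le (mul_pos hJpos hly) hSY0ge
  -- mean of Yb bounds
  have hmYle : (∫ ω, (1 / (J : ℝ)) * ∑ i ∈ s, Y i ω) ≤ Ly := by
    have := integral_mono_ae intYb (integrable_const Ly) (hYbig.mono fun ω h => h.2)
    simpa using this
  have hmYge : ly ≤ ∫ ω, (1 / (J : ℝ)) * ∑ i ∈ s, Y i ω := by
    have := integral_mono_ae (integrable_const ly) intYb (hYbig.mono fun ω h => h.1)
    simpa using this
  -- the ratio-linearization bound
  have hDbar : |(∫ ω, F 1 ω) / (∫ ω, (1 / (J : ℝ)) * ∑ i ∈ s, F i ω)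
      - ∫ ω, F 1 ω / ((1 / (J : ℝ)) * ∑ i ∈ s, F i ω)|
      ≤ |covar (F 1) (fun ω => (1 / (J : ℝ)) * ∑ i ∈ s, F i ω)| / lf ^ 2
        + Lf * var (fun ω => (1 / (J : ℝ)) * ∑ i ∈ s, F i ω) / lf ^ 3 :=
    ratio_bound (hFmeas 1 h1mem) measFb hlf
      ((hFbdd 1 h1mem).mono fun ω h => ⟨by linarith [h.1], h.2⟩) hFbig
  -- cross-covariance bound
  have hcovF1Fb : |covar (F 1) (fun ω => (1 / (J : ℝ)) * ∑ i ∈ s, F i ω)| ≤ τ₁ := by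
    rw [covar_const_mul, covar_sum_right _ _ intF
      (fun j hj => intFF 1 h1mem j (hsub j hj))]
    rw [abs_mul, abs_of_nonneg (by positivity : (0:ℝ) ≤ 1 / (J : ℝ))]
    calc (1 / (J : ℝ)) * |∑ i ∈ s, covar (F 1) (F i)|
        ≤ (1 / (J : ℝ)) * ∑ i ∈ s, |covar (F 1) (F i)| :=
          mul_le_mul_of_nonneg_left (Finset.abs_sum_le_sum_abs _ _) (by positivity)
      _ ≤ τ₁ := hcross
  -- variance bound
  have hvar0 : 0 ≤ var (fun ω => (1 / (J : ℝ)) * ∑ i ∈ s, F i ω) := by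
    have h0 : ∀ᵐ ω ∂ℙ, ((1 / (J : ℝ)) * ∑ i ∈ s, F i ω) ∈ Set.Icc lf Lf := hFbig
    exact var_nonneg_of_bdd measFb h0
  have hvarFb : var (fun ω => (1 / (J : ℝ)) * ∑ i ∈ s, F i ω)
      ≤ (Lf - lf) ^ 2 / (4 * (J : ℝ)) + τ := by
    have h1 : var (fun ω => (1 / (J : ℝ)) * ∑ i ∈ s, F i ω)
        = (1 / (J : ℝ)) * ((1 / (J : ℝ)) *
            covar (fun ω => ∑ i ∈ s, F i ω) (fun ω => ∑ i ∈ s, F i ω)) := by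
      show covar _ _ = _
      calc covar (fun ω => (1 / (J : ℝ)) * ∑ i ∈ s, F i ω)
            (fun ω => (1 / (J : ℝ)) * ∑ i ∈ s, F i ω)
          = (1 / (J : ℝ)) * covar (fun ω => (1 / (J : ℝ)) * ∑ i ∈ s, F i ω)
            (fun ω => ∑ i ∈ s, F i ω) := covar_const_mul _ _ _
        _ = (1 / (J : ℝ)) * covar (fun ω => ∑ i ∈ s, F i ω)
            (fun ω => (1 / (J : ℝ)) * ∑ i ∈ s, F i ω) := by rw [covar_comm]
        _ = (1 / (J : ℝ)) * ((1 / (J : ℝ)) *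
            covar (fun ω => ∑ i ∈ s, F i ω) (fun ω => ∑ i ∈ s, F i ω)) := by
            rw [covar_const_mul]
    have h2 : covar (fun ω => ∑ i ∈ s, F i ω) (fun ω => ∑ i ∈ s, F i ω)
        = ∑ i ∈ s, ∑ j ∈ s, covar (F i) (F j) :=
      covar_sum_sum _ _ intF intF (fun i hi j hj => intFF i (hsub i hi) j (hsub j hj))
    have h3 : (∑ i ∈ s, ∑ j ∈ s, covar (F i) (F j))
        ≤ (J : ℝ) * ((Lf - lf) ^ 2 / 4) + ∑ i ∈ s, ∑ j ∈ s.erase i, |covar (F i) (F j)| := by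
      have hrow : ∀ i ∈ s, (∑ j ∈ s, covar (F i) (F j))
          ≤ (Lf - lf) ^ 2 / 4 + ∑ j ∈ s.erase i, |covar (F i) (F j)| := by
        intro i hi
        rw [← Finset.add_sum_erase s _ hi]
        exact add_le_add (var_le_of_bdd (hFmeas i (hsub i hi)) (hFbdd i (hsub i hi)))
          (Finset.sum_le_sum fun j _ => le_abs_self _)
      calc (∑ i ∈ s, ∑ j ∈ s, covar (F i) (F j))
          ≤ ∑ i ∈ s, ((Lf - lf) ^ 2 / 4 + ∑ j ∈ s.erase i, |covar (F i) (F j)|) :=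
            Finset.sum_le_sum hrow
        _ = (J : ℝ) * ((Lf - lf) ^ 2 / 4)
              + ∑ i ∈ s, ∑ j ∈ s.erase i, |covar (F i) (F j)| := by
            rw [Finset.sum_add_distrib, Finset.sum_const, hcard, nsmul_eq_mul]
    have h4 : (∑ i ∈ s, ∑ j ∈ s.erase i, |covar (F i) (F j)|) ≤ (J : ℝ) ^ 2 * τ := by
      have hJ2 : (0 : ℝ) < (J : ℝ) ^ 2 := by positivity
      calc (∑ i ∈ s, ∑ j ∈ s.erase i, |covar (F i) (F j)|)
          = (J : ℝ) ^ 2 * ((1 / (J : ℝ) ^ 2) *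
              ∑ i ∈ s, ∑ j ∈ s.erase i, |covar (F i) (F j)|) := by field_simp
        _ ≤ (J : ℝ) ^ 2 * τ := mul_le_mul_of_nonneg_left hweak hJ2.le
    rw [h1, h2]
    calc (1 / (J : ℝ)) * ((1 / (J : ℝ)) * ∑ i ∈ s, ∑ j ∈ s, covar (F i) (F j))
        = (1 / (J : ℝ) ^ 2) * ∑ i ∈ s, ∑ j ∈ s, covar (F i) (F j) := by ring
      _ ≤ (1 / (J : ℝ) ^ 2) * ((J : ℝ) * ((Lf - lf) ^ 2 / 4) + (J : ℝ) ^ 2 * τ) := by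
          apply mul_le_mul_of_nonneg_left _ (by positivity)
          exact le_trans h3 (by linarith)
      _ = (Lf - lf) ^ 2 / (4 * (J : ℝ)) + τ := by field_simp
  -- identities for the bias
  have hSYeq : (∫ ω, ∑ i ∈ s, Y i ω) = ∫ ω, ∑ i ∈ s, Y0 i ω :=
    integral_congr_ae (hconsall.mono fun ω h => Finset.sum_congr rfl fun i hi => h i hi)
  have hY01 : (∫ ω, Y0 1 ω)
      = (∫ ω, F 1 ω) / (∫ ω, ∑ i ∈ s, F i ω) * ∫ ω, ∑ i ∈ s, Y0 i ω := by
    rw [div_eq_iff (ne_of_gt hSY0pos)] at hlogequi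
    exact hlogequi
  have hμeq : (∫ ω, (1 / (J : ℝ)) * ∑ i ∈ s, F i ω)
      = (1 / (J : ℝ)) * ∫ ω, ∑ i ∈ s, F i ω := integral_cmul _ _
  have hYbeq : (∫ ω, (1 / (J : ℝ)) * ∑ i ∈ s, Y i ω)
      = (1 / (J : ℝ)) * ∫ ω, ∑ i ∈ s, Y i ω := integral_cmul _ _
  have hY0eq' : (∫ ω, Y0 1 ω)
      = ((∫ ω, F 1 ω) / (∫ ω, (1 / (J : ℝ)) * ∑ i ∈ s, F i ω))
          * ∫ ω, (1 / (J : ℝ)) * ∑ i ∈ s, Y i ω := by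
    rw [hμeq, hYbeq, hY01, hSYeq]
    have hB : (∫ ω, ∑ i ∈ s, F i ω) ≠ 0 := ne_of_gt hSFpos
    field_simp
  -- rewriting the estimator's integral
  have hgoalL : (∫ ω, (Y 1 ω - F 1 ω / (∑ i ∈ s, F i ω) * ∑ i ∈ s, Y i ω))
      = (∫ ω, Y 1 ω) - ∫ ω, (F 1 ω / ((1 / (J : ℝ)) * ∑ i ∈ s, F i ω))
          * ((1 / (J : ℝ)) * ∑ i ∈ s, Y i ω) := by
    have hfe : (fun ω => Y 1 ω - F 1 ω / (∑ i ∈ s, F i ω) * ∑ i ∈ s, Y i ω)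
        = fun ω => Y 1 ω - (F 1 ω / ((1 / (J : ℝ)) * ∑ i ∈ s, F i ω))
            * ((1 / (J : ℝ)) * ∑ i ∈ s, Y i ω) := by
      funext ω
      by_cases hS : (∑ i ∈ s, F i ω) = 0
      · simp [hS]
      · have h1 : (1 / (J : ℝ)) * ∑ i ∈ s, F i ω ≠ 0 :=
          mul_ne_zero (one_div_ne_zero hJ') hS
        field_simp
    rw [hfe]
    exact integral_sub (hYint 1 h1mem) hintRYb
  have hsplit : (∫ ω, (F 1 ω / ((1 / (J : ℝ)) * ∑ i ∈ s, F i ω))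
        * ((1 / (J : ℝ)) * ∑ i ∈ s, Y i ω))
      = covar (fun ω => F 1 ω / ((1 / (J : ℝ)) * ∑ i ∈ s, F i ω))
          (fun ω => (1 / (J : ℝ)) * ∑ i ∈ s, Y i ω)
        + (∫ ω, F 1 ω / ((1 / (J : ℝ)) * ∑ i ∈ s, F i ω))
            * ∫ ω, (1 / (J : ℝ)) * ∑ i ∈ s, Y i ω := by
    simp only [covar]
    ring
  have hEq : (∫ ω, (Y 1 ω - F 1 ω / (∑ i ∈ s, F i ω) * ∑ i ∈ s, Y i ω))
      - ((∫ ω, Y 1 ω) - ∫ ω, Y0 1 ω)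
      = ((∫ ω, F 1 ω) / (∫ ω, (1 / (J : ℝ)) * ∑ i ∈ s, F i ω)
          - ∫ ω, F 1 ω / ((1 / (J : ℝ)) * ∑ i ∈ s, F i ω))
          * (∫ ω, (1 / (J : ℝ)) * ∑ i ∈ s, Y i ω)
        - covar (fun ω => F 1 ω / ((1 / (J : ℝ)) * ∑ i ∈ s, F i ω))
            (fun ω => (1 / (J : ℝ)) * ∑ i ∈ s, Y i ω) := by
    rw [hgoalL, hsplit, hY0eq']
    ring
  -- final numeric bound
  have hDfinal : |(∫ ω, F 1 ω) / (∫ ω, (1 / (J : ℝ)) * ∑ i ∈ s, F i ω)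
      - ∫ ω, F 1 ω / ((1 / (J : ℝ)) * ∑ i ∈ s, F i ω)|
      ≤ τ₁ / lf ^ 2 + ((Lf - lf) + Lf) / lf ^ 3 * ((Lf - lf) ^ 2 / (4 * (J : ℝ)) + τ) := by
    refine le_trans hDbar (add_le_add ?_ ?_)
    · exact div_le_div₀ hτ₁ hcovF1Fb (by positivity) le_rfl
    · rw [div_mul_eq_mul_div]
      refine div_le_div₀ ?_ ?_ (by positivity) le_rfl
      · apply mul_nonneg (by linarith)
        positivity
      · exact mul_le_mul (by linarith) hvarFb hvar0 (by linarith)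
  have hDnonneg : (0:ℝ) ≤ τ₁ / lf ^ 2
      + ((Lf - lf) + Lf) / lf ^ 3 * ((Lf - lf) ^ 2 / (4 * (J : ℝ)) + τ) := by
    apply add_nonneg (div_nonneg hτ₁ (by positivity))
    apply mul_nonneg (div_nonneg (by linarith) (by positivity))
    positivity
  rw [hEq]
  calc |((∫ ω, F 1 ω) / (∫ ω, (1 / (J : ℝ)) * ∑ i ∈ s, F i ω)
          - ∫ ω, F 1 ω / ((1 / (J : ℝ)) * ∑ i ∈ s, F i ω))
          * (∫ ω, (1 / (J : ℝ)) * ∑ i ∈ s, Y i ω)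
        - covar (fun ω => F 1 ω / ((1 / (J : ℝ)) * ∑ i ∈ s, F i ω))
            (fun ω => (1 / (J : ℝ)) * ∑ i ∈ s, Y i ω)|
      ≤ |(∫ ω, F 1 ω) / (∫ ω, (1 / (J : ℝ)) * ∑ i ∈ s, F i ω)
          - ∫ ω, F 1 ω / ((1 / (J : ℝ)) * ∑ i ∈ s, F i ω)|
          * |∫ ω, (1 / (J : ℝ)) * ∑ i ∈ s, Y i ω|
        + |covar (fun ω => F 1 ω / ((1 / (J : ℝ)) * ∑ i ∈ s, F i ω))
            (fun ω => (1 / (J : ℝ)) * ∑ i ∈ s, Y i ω)| := by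
        refine le_trans (abs_sub _ _) ?_
        rw [abs_mul]
    _ ≤ (τ₁ / lf ^ 2 + ((Lf - lf) + Lf) / lf ^ 3 * ((Lf - lf) ^ 2 / (4 * (J : ℝ)) + τ)) * Ly
        + C := by
        refine add_le_add (mul_le_mul hDfinal ?_ (abs_nonneg _) hDnonneg) hcov
        exact abs_le.2 ⟨by linarith, hmYle⟩
    _ = Ly * (τ₁ / lf ^ 2
          + ((Lf - lf) + Lf) / lf ^ 3 * ((Lf - lf) ^ 2 / (4 * (J : ℝ)) + τ)) + C := by ring
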